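/- Let T ≥ 2 be a natural number and p₀ ≥ 0 a real number, and for natural t set b(t) = (4/9)·(1 - t/T)². Let D : ℕ → ℝ satisfy D(t + 1) = b(t)·(D(t) + p₀) for all 1 ≤ t ≤ T - 1. Then for every natural number t with 1 ≤ t ≤ T - 1, |D(t + 1) - b(t + 1)·p₀/(1 - b(t + 1))| ≤ (4/9)·|D(t) - b(t)·p₀/(1 - b(t))| + (36·p₀/25)·(2T - 2t - 1)/T². -/
import Mathlib
set_option maxHeartbeats 1000000

/-- The contraction estimate proving Corollary 3.1 of the paper for the GWO
variance recursion `D(t+1) = b(t) (D(t) + p₀)` with `b(t) = (4/9)(1 - t/T)²`: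
the distance of `D(t)` from the instantaneous fixed point `b(t) p₀ / (1 - b(t))`
contracts by a factor `4/9` per step up to an error term of order `1/T`. -/
theorem gwo_variance_recursion_contraction
    (T : ℕ) (hT : 2 ≤ T) (p₀ : ℝ) (hp₀ : 0 ≤ p₀)
    (b : ℕ → ℝ) (hb : ∀ t : ℕ, b t = (4/9) * (1 - (t : ℝ) / (T : ℝ))^2)
    (D : ℕ → ℝ)
    (hrec : ∀ t : ℕ, 1 ≤ t → t ≤ T - 1 → D (t + 1) = b t * (D t + p₀)) :
    ∀ t : ℕ, 1 ≤ t → t ≤ T - 1 →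
      |D (t + 1) - b (t + 1) * p₀ / (1 - b (t + 1))|
        ≤ (4/9) * |D t - b t * p₀ / (1 - b t)|
          + (36 * p₀ / 25) * (2 * (T : ℝ) - 2 * (t : ℝ) - 1) / (T : ℝ)^2 := by
  intro t ht1 ht2
  have hT0 : (0:ℝ) < T := by
    have : 0 < T := by omega
    exact_mod_cast this
  have htT : (t:ℝ) + 1 ≤ T := by
    have : t + 1 ≤ T := by omega
    exact_mod_cast this
  have ht0 : (1:ℝ) ≤ t := by exact_mod_cast ht1
  have hbt : b t = 4/9 * (1 - (t:ℝ)/T)^2 := hb t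
  have hbt1 : b (t+1) = 4/9 * (1 - ((t:ℝ)+1)/T)^2 := by rw [hb]; push_cast; ring_nf
  have hv0 : (0:ℝ) ≤ 1 - ((t:ℝ)+1)/T := by
    rw [sub_nonneg, div_le_one hT0]; linarith
  have hu1 : (t:ℝ)/T ≤ 1 := by rw [div_le_one hT0]; linarith
  have hu0 : (0:ℝ) ≤ 1 - (t:ℝ)/T := by
    rw [sub_nonneg, div_le_one hT0]; linarith
  have huv : 1 - ((t:ℝ)+1)/T ≤ 1 - (t:ℝ)/T := by
    have : (t:ℝ)/T ≤ ((t:ℝ)+1)/T := by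
      gcongr
      linarith
    linarith
  have hbt0 : 0 ≤ b t := by rw [hbt]; positivity
  have hbt_le : b t ≤ 4/9 := by
    have hx0 : (0:ℝ) ≤ (t:ℝ)/T := by positivity
    rw [hbt]; nlinarith [mul_nonneg hx0 (by linarith : (0:ℝ) ≤ 2 - (t:ℝ)/T)]
  have hbt1_0 : 0 ≤ b (t+1) := by rw [hbt1]; positivity
  have hbt1_le : b (t+1) ≤ 4/9 := by
    have hy0 : (0:ℝ) ≤ ((t:ℝ)+1)/T := by positivity
    have hy1 : ((t:ℝ)+1)/T ≤ 1 := by rw [div_le_one hT0]; linarith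
    rw [hbt1]; nlinarith [mul_nonneg hy0 (by linarith : (0:ℝ) ≤ 2 - ((t:ℝ)+1)/T)]
  have h1bt : (5/9:ℝ) ≤ 1 - b t := by linarith
  have h1bt1 : (5/9:ℝ) ≤ 1 - b (t+1) := by linarith
  have h1bt_ne : (1 - b t) ≠ 0 := by linarith
  have h1bt1_ne : (1 - b (t+1)) ≠ 0 := by linarith
  have hT2 : (0:ℝ) < (T:ℝ)^2 := by positivity
  have hSnum : (0:ℝ) ≤ 2*(T:ℝ) - 2*(t:ℝ) - 1 := by linarith
  have hS0 : (0:ℝ) ≤ (2*(T:ℝ) - 2*(t:ℝ) - 1)/(T:ℝ)^2 := div_nonneg hSnum hT2.le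
  have hdiffb : b t - b (t+1) = (4/9) * ((2*(T:ℝ) - 2*(t:ℝ) - 1)/(T:ℝ)^2) := by
    rw [hbt, hbt1]; field_simp; ring
  have key : D (t+1) - b (t+1) * p₀ / (1 - b (t+1))
      = b t * (D t - b t * p₀ / (1 - b t))
        + (b t * p₀ / (1 - b t) - b (t+1) * p₀ / (1 - b (t+1))) := by
    have hft : (1 - b t) * (b t * p₀ / (1 - b t)) = b t * p₀ := by field_simp
    rw [hrec t ht1 ht2]; linear_combination (-1 : ℝ) * hft
  set S : ℝ := (2*(T:ℝ) - 2*(t:ℝ) - 1)/(T:ℝ)^2 with hSdef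
  have hP : (25/81:ℝ) ≤ (1 - b t) * (1 - b (t+1)) := by nlinarith
  have hPpos : (0:ℝ) < (1 - b t) * (1 - b (t+1)) := by nlinarith
  have hΔ : b t * p₀ / (1 - b t) - b (t+1) * p₀ / (1 - b (t+1))
      = p₀ * (4/9) * S / ((1 - b t) * (1 - b (t+1))) := by
    rw [div_sub_div _ _ h1bt_ne h1bt1_ne]
    congr 1
    linear_combination p₀ * hdiffb
  have hΔ0 : 0 ≤ b t * p₀ / (1 - b t) - b (t+1) * p₀ / (1 - b (t+1)) := by
    rw [hΔ]; positivity
  have hΔle : b t * p₀ / (1 - b t) - b (t+1) * p₀ / (1 - b (t+1))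
      ≤ 36 * p₀ / 25 * (2*(T:ℝ) - 2*(t:ℝ) - 1) / (T:ℝ)^2 := by
    rw [hΔ]
    have hgoal : 36 * p₀ / 25 * (2*(T:ℝ) - 2*(t:ℝ) - 1) / (T:ℝ)^2 = (36/25) * p₀ * S := by
      rw [hSdef]; ring
    rw [hgoal, div_le_iff₀ hPpos]
    have hpS : 0 ≤ p₀ * S := mul_nonneg hp₀ hS0
    nlinarith [mul_le_mul_of_nonneg_left hP hpS]
  rw [key]
  calc |b t * (D t - b t * p₀ / (1 - b t))
        + (b t * p₀ / (1 - b t) - b (t+1) * p₀ / (1 - b (t+1)))|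
      ≤ |b t * (D t - b t * p₀ / (1 - b t))|
        + |b t * p₀ / (1 - b t) - b (t+1) * p₀ / (1 - b (t+1))| := abs_add_le _ _
    _ ≤ 4/9 * |D t - b t * p₀ / (1 - b t)|
        + 36 * p₀ / 25 * (2*(T:ℝ) - 2*(t:ℝ) - 1) / (T:ℝ)^2 := by
        rw [abs_mul, abs_of_nonneg hbt0, abs_of_nonneg hΔ0]
        have := abs_nonneg (D t - b t * p₀ / (1 - b t))
        nlinarith
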